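/- In a finite-dimensional nilpotent Lie algebra g, define the filtration V₀ = 0 and V_i = {v ∈ g* : dv ∈ Λ² V_{i−1}} where d is the Chevalley–Eilenberg differential. Then V_i equals the annihilator of the i-th term g^i of the lower central series (g^0 = g, g^k = [g^{k−1}, g]), and there exists s with V_s = g*. -/

import Mathlib

/- STATEMENT 7: in a finite-dimensional nilpotent Lie algebra, the filtration
`V₀ = 0`, `V_i = {v ∈ g* : dv ∈ Λ² V_{i−1}}` of the dual (for the
Chevalley–Eilenberg differential `dξ(X,Y) = −ξ([X,Y])`) coincides with the
annihilators of the lower central series, and exhausts `g*`. -/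

variable {g : Type*} [LieRing g] [LieAlgebra ℝ g]

/-- The Chevalley–Eilenberg differential of a 1-form, as an alternating bilinear
form: `dξ(X,Y) = −ξ([X,Y])`. -/
noncomputable def ceDiff : Module.Dual ℝ g →ₗ[ℝ] (g →ₗ[ℝ] g →ₗ[ℝ] ℝ) where
  toFun v := LinearMap.mk₂ ℝ (fun X Y => - v ⁅X, Y⁆)
    (fun X X' Y => by simp [add_lie]; ring)
    (fun c X Y => by simp [smul_lie])
    (fun X Y Y' => by simp [lie_add]; ring)
    (fun c X Y => by simp [lie_smul])
  map_add' v w := by ext X Y; simp [LinearMap.mk₂]; ring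
  map_smul' c v := by ext X Y; simp [LinearMap.mk₂]

/-- The wedge of two 1-forms, as a bilinear form:
`(u∧w)(X,Y) = u(X)w(Y) − u(Y)w(X)`. -/
noncomputable def wedge1 (u w : Module.Dual ℝ g) : g →ₗ[ℝ] g →ₗ[ℝ] ℝ :=
  LinearMap.mk₂ ℝ (fun X Y => u X * w Y - u Y * w X)
    (fun X X' Y => by simp; ring)
    (fun c X Y => by simp; ring)
    (fun X Y Y' => by simp; ring)
    (fun c X Y => by simp; ring)

/-- `Λ² U`, for a subspace `U ⊆ g*`, viewed inside the space of bilinear forms: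
the span of the wedges of elements of `U`. -/
noncomputable def lambdaTwo (U : Submodule ℝ (Module.Dual ℝ g)) :
    Submodule ℝ (g →ₗ[ℝ] g →ₗ[ℝ] ℝ) :=
  Submodule.span ℝ {B | ∃ u ∈ U, ∃ w ∈ U, B = wedge1 u w}

/-- The filtration `V₀ = 0`, `V_i = {v : dv ∈ Λ² V_{i−1}}` of `g*`. -/
noncomputable def Vfil : ℕ → Submodule ℝ (Module.Dual ℝ g)
  | 0 => ⊥
  | (i + 1) => Submodule.comap ceDiff (lambdaTwo (Vfil i))

lemma ceDiff_apply (v : Module.Dual ℝ g) (X Y : g) : ceDiff v X Y = - v ⁅X, Y⁆ := rfl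

lemma wedge1_apply (u w : Module.Dual ℝ g) (X Y : g) :
    wedge1 u w X Y = u X * w Y - u Y * w X := rfl

lemma eval_zero_of_mem_lambdaTwo (W : Submodule ℝ g)
    {B : g →ₗ[ℝ] g →ₗ[ℝ] ℝ} (hB : B ∈ lambdaTwo W.dualAnnihilator)
    (X Y : g) (hY : Y ∈ W) : B X Y = 0 := by
  induction hB using Submodule.span_induction with
  | mem B hB =>
    obtain ⟨u, hu, w, hw, rfl⟩ := hB
    rw [wedge1_apply, (Submodule.mem_dualAnnihilator u).mp hu Y hY,
      (Submodule.mem_dualAnnihilator w).mp hw Y hY]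
    ring
  | zero => simp
  | add _ _ _ _ h1 h2 => simp [h1, h2]
  | smul c _ _ h => simp [h]

lemma mem_lambdaTwo_of_skew_vanish [FiniteDimensional ℝ g] (W : Submodule ℝ g)
    (B : g →ₗ[ℝ] g →ₗ[ℝ] ℝ) (hskew : ∀ X Y, B X Y = - B Y X)
    (hvan : ∀ X Y, Y ∈ W → B X Y = 0) :
    B ∈ lambdaTwo W.dualAnnihilator := by
  obtain ⟨C, hC⟩ := Submodule.exists_isCompl W
  have hC' : IsCompl C W := hC.symm
  set pr : g →ₗ[ℝ] C := C.projectionOnto W hC' with hpr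
  let b := Module.finBasis ℝ C
  set f : Fin (Module.finrank ℝ C) → Module.Dual ℝ g :=
    fun i => (b.coord i).comp pr with hf
  have hfW : ∀ i, f i ∈ W.dualAnnihilator := by
    intro i
    rw [Submodule.mem_dualAnnihilator]
    intro w hw
    simp [hf, hpr, Submodule.linearProjOfIsCompl_apply_right' hC' hw]
  -- decomposition
  have hdec : ∀ x : g, ∃ w ∈ W, x = w + (pr x : g) := by
    intro x
    have hx : x ∈ W ⊔ C := by rw [hC.sup_eq_top]; trivial
    obtain ⟨w, hw, c, hc, hwc⟩ := Submodule.mem_sup.mp hx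
    refine ⟨w, hw, ?_⟩
    have : pr x = ⟨c, hc⟩ := by
      rw [← hwc]
      rw [map_add, Submodule.linearProjOfIsCompl_apply_right' hC' hw,
        Submodule.projectionOnto_apply_left hC' ⟨c, hc⟩]
      simp
    rw [this, ← hwc]
  have key : ∀ (r1 r2 : Fin (Module.finrank ℝ C) → ℝ),
      ∑ i, ∑ j, ((1/2 : ℝ) * B (b i : g) (b j : g)) * (r1 i * r2 j - r1 j * r2 i)
        = ∑ i, ∑ j, B (b i : g) (b j : g) * (r1 i * r2 j) := by
    intro r1 r2
    have h2 : ∑ i, ∑ j, B (b i : g) (b j : g) * (r1 j * r2 i)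
        = - ∑ i, ∑ j, B (b i : g) (b j : g) * (r1 i * r2 j) := by
      calc ∑ i, ∑ j, B (b i : g) (b j : g) * (r1 j * r2 i)
          = ∑ i, ∑ j, -(B (b j : g) (b i : g) * (r1 j * r2 i)) := by
            refine Finset.sum_congr rfl fun i _ => Finset.sum_congr rfl fun j _ => ?_
            rw [hskew (b i : g) (b j : g)]; ring
        _ = ∑ j, ∑ i, -(B (b j : g) (b i : g) * (r1 j * r2 i)) := Finset.sum_comm
        _ = - ∑ i, ∑ j, B (b i : g) (b j : g) * (r1 i * r2 j) := by
            simp [Finset.sum_neg_distrib]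
    calc ∑ i, ∑ j, ((1/2 : ℝ) * B (b i : g) (b j : g)) * (r1 i * r2 j - r1 j * r2 i)
        = ∑ i, ∑ j, ((1/2 : ℝ) * (B (b i : g) (b j : g) * (r1 i * r2 j))
            - (1/2 : ℝ) * (B (b i : g) (b j : g) * (r1 j * r2 i))) := by
          refine Finset.sum_congr rfl fun i _ => Finset.sum_congr rfl fun j _ => by ring
      _ = (1/2 : ℝ) * (∑ i, ∑ j, B (b i : g) (b j : g) * (r1 i * r2 j))
            - (1/2 : ℝ) * (∑ i, ∑ j, B (b i : g) (b j : g) * (r1 j * r2 i)) := by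
          simp [Finset.sum_sub_distrib, Finset.mul_sum]
      _ = ∑ i, ∑ j, B (b i : g) (b j : g) * (r1 i * r2 j) := by rw [h2]; ring
  have hBeq : B = ∑ i, ∑ j, ((1/2 : ℝ) * B (b i : g) (b j : g)) • wedge1 (f i) (f j) := by
    ext X Y
    obtain ⟨w1, hw1, hX⟩ := hdec X
    obtain ⟨w2, hw2, hY⟩ := hdec Y
    have hfX : ∀ i, f i X = b.repr (pr X) i := fun i => rfl
    have hfY : ∀ i, f i Y = b.repr (pr Y) i := fun i => rfl
    have h1 : B w1 (pr Y : g) = 0 := by rw [hskew]; rw [hvan _ _ hw1]; ring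
    have hLHS : B X Y = B (pr X : g) (pr Y : g) := by
      conv_lhs => rw [hX, hY]
      simp only [map_add, LinearMap.add_apply]
      rw [hvan w1 w2 hw2, hvan (pr X : g) w2 hw2, h1]
      ring
    have hc1 : (pr X : g) = ∑ i, b.repr (pr X) i • (b i : g) := by
      conv_lhs => rw [← b.sum_repr (pr X)]
      simp only [Submodule.coe_sum, Submodule.coe_smul]
    have hc2 : (pr Y : g) = ∑ i, b.repr (pr Y) i • (b i : g) := by
      conv_lhs => rw [← b.sum_repr (pr Y)]
      simp only [Submodule.coe_sum, Submodule.coe_smul]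
    have hexp : B (pr X : g) (pr Y : g)
        = ∑ i, ∑ j, B (b i : g) (b j : g) * (b.repr (pr X) i * b.repr (pr Y) j) := by
      rw [hc1, hc2]
      simp only [map_sum, map_smul, LinearMap.sum_apply, LinearMap.smul_apply, smul_eq_mul,
        Finset.mul_sum]
      rw [Finset.sum_comm]
      refine Finset.sum_congr rfl fun i _ => Finset.sum_congr rfl fun j _ => by ring
    rw [hLHS, hexp]
    simp only [LinearMap.coe_sum, Finset.sum_apply, LinearMap.smul_apply, smul_eq_mul]
    rw [← key (b.repr (pr X)) (b.repr (pr Y))]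
    refine Finset.sum_congr rfl fun i _ => Finset.sum_congr rfl fun j _ => ?_
    rw [wedge1_apply, hfX, hfY, hfX, hfY]
    ring
  rw [hBeq]
  refine Submodule.sum_mem _ fun i _ => Submodule.sum_mem _ fun j _ =>
    Submodule.smul_mem _ _ (Submodule.subset_span ⟨f i, hfW i, f j, hfW j, rfl⟩)

/-- `V_i` equals the annihilator of the `i`-th term `g^i` of the lower
central series (`g^0 = g`, `g^k = [g^{k−1}, g]`), and `V_s = g*` for some `s`. -/
theorem Vfil_eq_dualAnnihilator_lowerCentralSeries
    [FiniteDimensional ℝ g] [LieModule.IsNilpotent g g] :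
    (∀ i, Vfil (g := g) i =
      (LieSubmodule.toSubmodule (LieModule.lowerCentralSeries ℝ g g i)).dualAnnihilator)
    ∧ ∃ s, Vfil (g := g) s = ⊤ := by
  have main : ∀ i, Vfil (g := g) i =
      (LieSubmodule.toSubmodule (LieModule.lowerCentralSeries ℝ g g i)).dualAnnihilator := by
    intro i
    induction i with
    | zero =>
      rw [show Vfil (g := g) 0 = ⊥ from rfl, LieModule.lowerCentralSeries_zero,
        LieSubmodule.top_toSubmodule, Submodule.dualAnnihilator_top]
    | succ i ih =>
      rw [show Vfil (g := g) (i + 1) = Submodule.comap ceDiff (lambdaTwo (Vfil i)) from rfl, ih]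
      apply le_antisymm
      · intro v hv
        rw [Submodule.mem_dualAnnihilator]
        intro m hm
        have hle : LieSubmodule.toSubmodule (LieModule.lowerCentralSeries ℝ g g (i + 1)) ≤
            LinearMap.ker v := by
          rw [LieModule.lowerCentralSeries_succ, LieSubmodule.lieIdeal_oper_eq_linear_span,
            Submodule.span_le]
          rintro m ⟨x, n, rfl⟩
          have hn : (n : g) ∈ LieSubmodule.toSubmodule (LieModule.lowerCentralSeries ℝ g g i) :=
            (LieSubmodule.mem_toSubmodule _).mpr n.2
          have h0 := eval_zero_of_mem_lambdaTwo _ (Submodule.mem_comap.mp hv) (x : g) (n : g) hn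
          rw [ceDiff_apply] at h0
          simpa [LinearMap.mem_ker] using h0
        exact hle hm
      · intro v hv
        rw [Submodule.mem_comap]
        apply mem_lambdaTwo_of_skew_vanish
        · intro X Y
          rw [ceDiff_apply, ceDiff_apply, ← lie_skew X Y, map_neg, neg_neg]
        · intro X Y hY
          rw [ceDiff_apply]
          have hmem : ⁅X, Y⁆ ∈ LieModule.lowerCentralSeries ℝ g g (i + 1) := by
            rw [LieModule.lowerCentralSeries_succ]
            exact LieSubmodule.lie_mem_lie (LieSubmodule.mem_top X)
              ((LieSubmodule.mem_toSubmodule _).mp hY)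
          have := (Submodule.mem_dualAnnihilator v).mp hv ⁅X, Y⁆
            ((LieSubmodule.mem_toSubmodule _).mpr hmem)
          simp [this]
  refine ⟨main, ?_⟩
  obtain ⟨s, hs⟩ := LieModule.IsNilpotent.nilpotent ℝ g g
  exact ⟨s, by rw [main s, hs, LieSubmodule.bot_toSubmodule, Submodule.dualAnnihilator_bot]⟩
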